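/- arXiv:1601.06065 — 2 statements merged into one kernel-verified Lean document; each statement's English description precedes it below -/
import Mathlib

section
/- Under the conflict graph model at link i with the local Gibbs distribution given by fugacities β_{ik} (as above), the service rates s_i = e^{β_{ii}}/Z_i and s_j = (1 - s_i)·e^{β_{ij}}/(1 + e^{β_{ij}}) for j ≠ i determine the fugacities: e^{β_{ij}} = s_j/(1 - s_i - s_j) for j ∈ N_i \ {i}, and e^{β_{ii}} = (s_i/(1 - s_i)) · ∏_{j∈N_i\{i}} (1 - s_i)/(1 - s_i - s_j), provided 0 < s_i, 0 < s_j, and s_i + s_j < 1 for all j ≠ i. -/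
open Finset Real

/-- Inversion of the service-rate equations under the conflict graph model:
if the Gibbs marginals equal the target rates `s` (with `0 < s i`, `0 < s j`,
`s i + s j < 1` for `j ≠ i`), then the fugacities have the closed form
`exp (β j) = s j / (1 - s i - s j)` for `j ≠ i` and
`exp (β i) = (s i/(1 - s i)) ∏_{j ≠ i} (1 - s i)/(1 - s i - s j)`. -/
theorem conflict_graph_fugacity_inversion
    {ι : Type*} [Fintype ι] [DecidableEq ι] (i : ι) (β s : ι → ℝ) (Z : ℝ)
    (hZ : Z = Real.exp (β i) + ∏ j ∈ Finset.univ.erase i, (1 + Real.exp (β j)))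
    (hsi : 0 < s i)
    (hsj : ∀ j, j ≠ i → 0 < s j ∧ s i + s j < 1)
    (hmi : s i = Real.exp (β i) / Z)
    (hmj : ∀ j, j ≠ i →
      s j = (1 - s i) * Real.exp (β j) / (1 + Real.exp (β j))) :
    (∀ j, j ≠ i → Real.exp (β j) = s j / (1 - s i - s j)) ∧
    Real.exp (β i) = (s i / (1 - s i)) *
      ∏ j ∈ Finset.univ.erase i, (1 - s i) / (1 - s i - s j) := by
  set P : ℝ := ∏ j ∈ Finset.univ.erase i, (1 + Real.exp (β j)) with hP
  have hPpos : 0 < P := by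
    apply Finset.prod_pos
    intro j _
    positivity
  have hZpos : 0 < Z := by
    rw [hZ]; positivity
  have hei : Real.exp (β i) = s i * Z := by
    field_simp at hmi
    linarith [hmi]
  have heiP : Real.exp (β i) * (1 - s i) = s i * P := by
    rw [hZ] at hei; ring_nf; ring_nf at hei; nlinarith [hei]
  have h1si : 0 < 1 - s i := by
    nlinarith [Real.exp_pos (β i), heiP, mul_pos hsi hPpos]
  -- part 1
  have hpart1 : ∀ j, j ≠ i → Real.exp (β j) = s j / (1 - s i - s j) := by
    intro j hj
    obtain ⟨hsjpos, hsum⟩ := hsj j hj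
    have hden : 0 < 1 - s i - s j := by
      have h := hmj j hj
      have he : 0 < 1 + Real.exp (β j) := by positivity
      have : s j * (1 + Real.exp (β j)) = (1 - s i) * Real.exp (β j) := by
        field_simp at h; linarith
      nlinarith [Real.exp_pos (β j)]
    have h := hmj j hj
    have he : (1 + Real.exp (β j)) ≠ 0 := by positivity
    field_simp at h ⊢
    nlinarith [h]
  constructor
  · exact hpart1
  · have hprod : ∏ j ∈ Finset.univ.erase i, (1 - s i) / (1 - s i - s j) = P := by
      rw [hP]
      apply Finset.prod_congr rfl
      intro j hj
      have hj' : j ≠ i := Finset.ne_of_mem_erase hj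
      have hden : 0 < 1 - s i - s j := by
        obtain ⟨hsjpos, hsum⟩ := hsj j hj'
        by_contra hcon
        push_neg at hcon
        have := hpart1 j hj'
        have h2 : s j / (1 - s i - s j) ≤ 0 := div_nonpos_of_nonneg_of_nonpos hsjpos.le hcon
        nlinarith [Real.exp_pos (β j)]
      rw [hpart1 j hj']
      field_simp
      ring
    rw [hprod]
    rw [div_mul_eq_mul_div, eq_div_iff (ne_of_gt h1si)]
    linarith [heiP]
end

section
/- With a, c_j as in the previous statement (a = s₀∏(1+c_k)/(1-s₀), c_j = s_j/(1-s₀-s_j), 0 < s₀, 0 < s_j, s₀+s_j < 1), for each j: c_j ∏_{k≠j} (1 + c_k) / (a + ∏_k (1 + c_k)) = s_j. -/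
open Finset

/-- Verification of the neighbor service-rate equations: with
`c j = s j / (1 - s₀ - s j)` and `a = s₀ ∏ (1 + c k) / (1 - s₀)`, for every
neighbor `j` the Gibbs marginal `c j ∏_{k ≠ j} (1 + c k) / (a + ∏ (1 + c k))`
equals the target rate `s j`. -/
theorem conflict_graph_fugacity_verification_neighbor (n : ℕ) (s₀ : ℝ)
    (hs₀ : 0 < s₀ ∧ s₀ < 1) (s : Fin n → ℝ)
    (hs : ∀ j, 0 < s j ∧ s₀ + s j < 1)
    (c : Fin n → ℝ) (hc : ∀ j, c j = s j / (1 - s₀ - s j))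
    (a : ℝ) (ha : a = s₀ * (∏ k, (1 + c k)) / (1 - s₀)) :
    ∀ j, c j * (∏ k ∈ Finset.univ.erase j, (1 + c k)) /
        (a + ∏ k, (1 + c k)) = s j := by
  intro j
  have hden : ∀ k, 0 < 1 - s₀ - s k := fun k => by have := (hs k).2; linarith
  have h1 : (0:ℝ) < 1 - s₀ := by linarith [hs₀.2]
  have hpos : ∀ k, 0 < 1 + c k := by
    intro k
    rw [hc k]
    have := hden k
    have := (hs k).1
    positivity
  have hP : 0 < ∏ k, (1 + c k) := Finset.prod_pos (fun k _ => hpos k)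
  set P := ∏ k, (1 + c k) with hPdef
  have hsplit : (1 + c j) * (∏ k ∈ Finset.univ.erase j, (1 + c k)) = P := by
    rw [hPdef, ← Finset.prod_erase_mul _ _ (Finset.mem_univ j)]
    ring
  have h1cj : 1 + c j = (1 - s₀) / (1 - s₀ - s j) := by
    rw [hc j]; field_simp [(hden j).ne']; ring
  have hnum : c j * (∏ k ∈ Finset.univ.erase j, (1 + c k)) = s j * P / (1 - s₀) := by
    have hErase : (∏ k ∈ Finset.univ.erase j, (1 + c k)) = P / (1 + c j) := by
      rw [eq_div_iff (hpos j).ne', mul_comm, hsplit]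
    rw [hErase, h1cj, hc j]
    have := hden j
    field_simp
  have hdenom : a + P = P / (1 - s₀) := by
    rw [ha]; field_simp; ring
  rw [hnum, hdenom]
  rw [mul_div_assoc]
  exact mul_div_cancel_right₀ _ (by positivity)
end
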